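/- (Key estimate in the proof of Theorem 2.1.) Let X ⊆ ℝ^l, let f be Lipschitz with constant L on N_δ(x̄) ∩ X for some δ > 0, let a > 0 and γ > 0, and let x ∈ G with ‖x − x̄‖ < δ. Suppose u ∈ T(G,x) with ‖u‖ = 1 and h is Hadamard differentiable at x with respect to X in direction u with h'_H(x;u;X) ≤ −a/2. Then the lower Hadamard derivative of x ↦ F(x,γ) = f(x) + γ h(x) + ½‖x − x̄‖² with respect to G at x in direction u satisfies ∂⁻F(·,γ)(x;u;G) ≤ 2L − (a/4)γ + 2δ. In particular it is negative for all γ > (2L + 2δ)·4/a. -/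

import Mathlib

open Filter Topology

noncomputable section

/-- The lower Hadamard directional derivative of `f` at `x` in direction `u` with respect to
the set `S`, as an extended real number.  It is the `liminf` of the difference quotients
`(f (x + t • u') - f x) / t` as `(t, u') → (0⁺, u)` subject to `x + t • u' ∈ S`.
When `u` is not in the Bouligand tangent cone of `S` at `x` the restricting filter is the
bottom filter, and the `liminf` is `+∞`, in accordance with the convention
`∂⁻f(x;u;S) = +∞` for `u ∉ T(S,x)`. -/
def lowerHadamardDeriv {l : ℕ} (f : EuclideanSpace ℝ (Fin l) → ℝ) (S : Set (EuclideanSpace ℝ (Fin l)))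
    (x u : EuclideanSpace ℝ (Fin l)) : EReal :=
  Filter.liminf
    (fun p : ℝ × EuclideanSpace ℝ (Fin l) => (((f (x + p.1 • p.2) - f x) / p.1 : ℝ) : EReal))
    ((nhdsWithin (0 : ℝ) (Set.Ioi 0) ×ˢ nhds u) ⊓
      Filter.principal {p : ℝ × EuclideanSpace ℝ (Fin l) | x + p.1 • p.2 ∈ S})

/-- `f` is Hadamard differentiable at `x` in direction `u` with respect to `S`, with
(extended real) derivative `d`: the full limit of the difference quotients
`(f (x + t • u') - f x) / t` as `(t, u') → (0⁺, u)` subject to `x + t • u' ∈ S` exists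
and equals `d`. -/
def HasHadamardDerivAt {l : ℕ} (f : EuclideanSpace ℝ (Fin l) → ℝ) (S : Set (EuclideanSpace ℝ (Fin l)))
    (x u : EuclideanSpace ℝ (Fin l)) (d : EReal) : Prop :=
  Filter.Tendsto
    (fun p : ℝ × EuclideanSpace ℝ (Fin l) => (((f (x + p.1 • p.2) - f x) / p.1 : ℝ) : EReal))
    ((nhdsWithin (0 : ℝ) (Set.Ioi 0) ×ˢ nhds u) ⊓
      Filter.principal {p : ℝ × EuclideanSpace ℝ (Fin l) | x + p.1 • p.2 ∈ S})
    (nhds d)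

/-- The Bouligand tangent cone (contingent cone) of `S` at `x`. -/
def bouligandCone {l : ℕ} (S : Set (EuclideanSpace ℝ (Fin l))) (x : EuclideanSpace ℝ (Fin l)) : Set (EuclideanSpace ℝ (Fin l)) :=
  {u | ∃ (t : ℕ → ℝ) (v : ℕ → EuclideanSpace ℝ (Fin l)),
    (∀ k, 0 < t k) ∧ Filter.Tendsto t Filter.atTop (nhds 0) ∧
    Filter.Tendsto v Filter.atTop (nhds u) ∧ ∀ k, x + t k • v k ∈ S}

/-- `h := h₁² + ⋯ + h_q²`. -/
def hsum {l q : ℕ} (hf : Fin q → EuclideanSpace ℝ (Fin l) → ℝ) (x : EuclideanSpace ℝ (Fin l)) : ℝ :=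
  ∑ j, (hf j x) ^ 2

/-- `G := {x ∈ X : gᵢ(x) ≤ 0, i = 1,…,m}`. -/
def Gset {l m : ℕ} (X : Set (EuclideanSpace ℝ (Fin l))) (g : Fin m → EuclideanSpace ℝ (Fin l) → ℝ) : Set (EuclideanSpace ℝ (Fin l)) :=
  {x ∈ X | ∀ i, g i x ≤ 0}

/-- The feasible set `S := {x ∈ G : h(x) = 0}` of problem (P). -/
def Sset {l m q : ℕ} (X : Set (EuclideanSpace ℝ (Fin l))) (g : Fin m → EuclideanSpace ℝ (Fin l) → ℝ)
    (hf : Fin q → EuclideanSpace ℝ (Fin l) → ℝ) : Set (EuclideanSpace ℝ (Fin l)) :=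
  {x ∈ Gset X g | hsum hf x = 0}

/-- The penalty function `F(x,γ) := f(x) + γ h(x) + ½‖x - xbar‖²`. -/
def Fpen {l q : ℕ} (f : EuclideanSpace ℝ (Fin l) → ℝ) (hf : Fin q → EuclideanSpace ℝ (Fin l) → ℝ)
    (xbar : EuclideanSpace ℝ (Fin l)) (γ : ℝ) (x : EuclideanSpace ℝ (Fin l)) : ℝ :=
  f x + γ * hsum hf x + (1 / 2) * ‖x - xbar‖ ^ 2

set_option maxHeartbeats 1000000

/-- Key estimate in the proof of Theorem 2.1. -/
theorem penalty_derivative_estimate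
    {l m q : ℕ}
    {X : Set (EuclideanSpace ℝ (Fin l))}
    {f : EuclideanSpace ℝ (Fin l) → ℝ}
    {g : Fin m → EuclideanSpace ℝ (Fin l) → ℝ}
    {hf : Fin q → EuclideanSpace ℝ (Fin l) → ℝ}
    {xbar : EuclideanSpace ℝ (Fin l)}
    {δ L a γ : ℝ} {x u : EuclideanSpace ℝ (Fin l)} {dh : EReal}
    (hδ : 0 < δ)
    (hLip : ∀ x ∈ {y | ‖y - xbar‖ ≤ δ} ∩ X, ∀ y ∈ {y | ‖y - xbar‖ ≤ δ} ∩ X,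
      |f x - f y| ≤ L * ‖x - y‖)
    (ha : 0 < a) (hγ : 0 < γ)
    (hxG : x ∈ Gset X g)
    (hxδ : ‖x - xbar‖ < δ)
    (hu : u ∈ bouligandCone (Gset X g) x)
    (hunorm : ‖u‖ = 1)
    (hder : HasHadamardDerivAt (hsum hf) X x u dh)
    (hdh : dh ≤ ((-(a / 2) : ℝ) : EReal)) :
    lowerHadamardDeriv (Fpen f hf xbar γ) (Gset X g) x u
        ≤ ((2 * L - a / 4 * γ + 2 * δ : ℝ) : EReal) ∧
      ((2 * L + 2 * δ) * 4 / a < γ →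
        lowerHadamardDeriv (Fpen f hf xbar γ) (Gset X g) x u < 0) := by

  classical
  set c : ℝ := 2 * L - a / 4 * γ + 2 * δ with hc
  set Flt : Filter (ℝ × EuclideanSpace ℝ (Fin l)) :=
    (nhdsWithin (0 : ℝ) (Set.Ioi 0) ×ˢ nhds u) ⊓
      Filter.principal {p : ℝ × EuclideanSpace ℝ (Fin l) | x + p.1 • p.2 ∈ Gset X g} with hFlt
  have hneBot : Flt.NeBot := by
    obtain ⟨t, v, htpos, ht0, hv, hmem⟩ := hu
    have h1 : Filter.Tendsto (fun k => (t k, v k)) Filter.atTop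
        ((nhdsWithin (0 : ℝ) (Set.Ioi 0)) ×ˢ nhds u) := by
      refine Filter.Tendsto.prodMk ?_ hv
      exact tendsto_nhdsWithin_of_tendsto_nhds_of_eventually_within _ ht0
        (Filter.Eventually.of_forall htpos)
    have h2 : Filter.Tendsto (fun k => (t k, v k)) Filter.atTop Flt := by
      rw [hFlt, Filter.tendsto_inf]
      exact ⟨h1, Filter.tendsto_principal.2 (Filter.Eventually.of_forall hmem)⟩
    exact Filter.neBot_of_le h2
  set nx : ℝ := ‖x - xbar‖ with hnx
  have hnx0 : 0 ≤ nx := norm_nonneg _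
  set ε : ℝ := min ((δ - nx) * (2 / 3)) (δ * (4 / 9)) with hε
  have hεpos : 0 < ε := lt_min (by nlinarith) (by nlinarith)
  -- eventual facts
  have hA : ∀ᶠ p : ℝ × EuclideanSpace ℝ (Fin l) in Flt, p.1 ∈ Set.Ioo (0 : ℝ) ε := by
    apply Filter.Eventually.filter_mono (inf_le_left : Flt ≤ _)
    exact tendsto_fst (Ioo_mem_nhdsGT_of_mem ⟨le_refl _, hεpos⟩)
  have hB : ∀ᶠ p : ℝ × EuclideanSpace ℝ (Fin l) in Flt, ‖p.2‖ ∈ Set.Ioo (1/2 : ℝ) (3/2) := by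
    apply Filter.Eventually.filter_mono (inf_le_left : Flt ≤ _)
    have h2 : Filter.Tendsto (fun p : ℝ × EuclideanSpace ℝ (Fin l) => ‖p.2‖)
        (nhdsWithin (0 : ℝ) (Set.Ioi 0) ×ˢ nhds u) (nhds ‖u‖) :=
      (continuous_norm.tendsto u).comp tendsto_snd
    have hmem : ‖u‖ ∈ Set.Ioo (1/2 : ℝ) (3/2) := by rw [hunorm]; constructor <;> norm_num
    exact h2 (isOpen_Ioo.mem_nhds hmem)
  have hC : ∀ᶠ p : ℝ × EuclideanSpace ℝ (Fin l) in Flt, x + p.1 • p.2 ∈ Gset X g := by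
    apply Filter.Eventually.filter_mono (inf_le_right : Flt ≤ _)
    exact Filter.eventually_principal.2 fun p hp => hp
  have hFleX : Flt ≤ (nhdsWithin (0 : ℝ) (Set.Ioi 0) ×ˢ nhds u) ⊓
      Filter.principal {p : ℝ × EuclideanSpace ℝ (Fin l) | x + p.1 • p.2 ∈ X} := by
    refine inf_le_inf_left _ (Filter.principal_mono.2 ?_)
    exact fun p hp => hp.1
  have hderF := hder.mono_left hFleX
  have hdlt : dh < ((-(a / 4) : ℝ) : EReal) := by
    refine lt_of_le_of_lt hdh ?_
    exact_mod_cast (by linarith : -(a / 2) < -(a / 4))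
  have hD : ∀ᶠ p : ℝ × EuclideanSpace ℝ (Fin l) in Flt,
      (hsum hf (x + p.1 • p.2) - hsum hf x) / p.1 < -(a / 4) := by
    have hE := hderF.eventually_lt_const hdlt
    filter_upwards [hE] with p hp
    exact_mod_cast hp
  have hev : ∀ᶠ p : ℝ × EuclideanSpace ℝ (Fin l) in Flt,
      ((Fpen f hf xbar γ (x + p.1 • p.2) - Fpen f hf xbar γ x) / p.1 : ℝ) ≤ c := by
    filter_upwards [hA, hB, hC, hD] with p hpA hpB hpC hpD
    obtain ⟨ht0, htε⟩ := hpA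
    obtain ⟨hw1, hw2⟩ := hpB
    set t := p.1 with hts
    set w := p.2 with hws
    set y := x + t • w with hy
    have htne : t ≠ 0 := ne_of_gt ht0
    have hε1 : t < (δ - nx) * (2 / 3) := lt_of_lt_of_le htε (min_le_left _ _)
    have hε2 : t < δ * (4 / 9) := lt_of_lt_of_le htε (min_le_right _ _)
    have hyx : y - x = t • w := by rw [hy]; abel
    have hyxbar : y - xbar = (x - xbar) + t • w := by rw [hy]; abel
    have hnyx : ‖y - x‖ = t * ‖w‖ := by
      rw [hyx, norm_smul, Real.norm_eq_abs, abs_of_pos ht0]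
    have hyN : ‖y - xbar‖ ≤ δ := by
      calc ‖y - xbar‖ ≤ ‖x - xbar‖ + ‖t • w‖ := by rw [hyxbar]; exact norm_add_le _ _
        _ = nx + t * ‖w‖ := by rw [norm_smul, Real.norm_eq_abs, abs_of_pos ht0, hnx]
        _ ≤ δ := by nlinarith
    have hyX : y ∈ X := hpC.1
    have hxN : x ∈ {y | ‖y - xbar‖ ≤ δ} ∩ X := ⟨le_of_lt hxδ, hxG.1⟩
    have hfb : |f y - f x| ≤ L * (t * ‖w‖) := by
      have := hLip y ⟨hyN, hyX⟩ x hxN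
      rwa [hnyx] at this
    have hL0 : 0 ≤ L * (t * ‖w‖) := le_trans (abs_nonneg _) hfb
    have hfq : (f y - f x) / t ≤ 2 * L := by
      rw [div_le_iff₀ ht0]
      have h1 : f y - f x ≤ L * (t * ‖w‖) := le_trans (le_abs_self _) hfb
      nlinarith
    have hhq : γ * ((hsum hf y - hsum hf x) / t) ≤ γ * (-(a / 4)) :=
      mul_le_mul_of_nonneg_left (le_of_lt hpD) (le_of_lt hγ)
    have hinner : (inner ℝ (x - xbar) w : ℝ) ≤ nx * ‖w‖ := by
      calc (inner ℝ (x - xbar) w : ℝ) ≤ ‖x - xbar‖ * ‖w‖ := real_inner_le_norm _ _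
        _ = nx * ‖w‖ := by rw [hnx]
    have hsq : ‖y - xbar‖ ^ 2 = ‖x - xbar‖ ^ 2 + 2 * (t * (inner ℝ (x - xbar) w : ℝ)) + t ^ 2 * ‖w‖ ^ 2 := by
      rw [hyxbar, norm_add_sq_real, real_inner_smul_right, norm_smul, Real.norm_eq_abs,
        abs_of_pos ht0, mul_pow]
    have hnq : ((1:ℝ)/2 * ‖y - xbar‖ ^ 2 - 1/2 * ‖x - xbar‖ ^ 2) / t
        = (inner ℝ (x - xbar) w : ℝ) + t * ‖w‖ ^ 2 / 2 := by
      rw [hsq]; field_simp; ring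
    have hnqb : ((1:ℝ)/2 * ‖y - xbar‖ ^ 2 - 1/2 * ‖x - xbar‖ ^ 2) / t ≤ 2 * δ := by
      rw [hnq]
      have a0 : (0:ℝ) ≤ ‖w‖ := norm_nonneg w
      have a1 : nx * ‖w‖ ≤ δ * (3/2) :=
        mul_le_mul (le_of_lt hxδ) (le_of_lt hw2) a0 (le_of_lt hδ)
      have a2 : ‖w‖ ^ 2 ≤ (3/2 : ℝ) ^ 2 := by nlinarith
      have a3 : t * ‖w‖ ^ 2 ≤ (δ * (4/9)) * ((3/2 : ℝ) ^ 2) :=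
        mul_le_mul (le_of_lt hε2) a2 (sq_nonneg _) (by linarith)
      have hib : (inner ℝ (x - xbar) w : ℝ) ≤ δ * (3/2) := le_trans hinner a1
      nlinarith [hib, a3]
    have hsplit : (Fpen f hf xbar γ y - Fpen f hf xbar γ x) / t
        = (f y - f x) / t + γ * ((hsum hf y - hsum hf x) / t)
          + ((1:ℝ)/2 * ‖y - xbar‖ ^ 2 - 1/2 * ‖x - xbar‖ ^ 2) / t := by
      simp only [Fpen]
      field_simp
      ring
    rw [hsplit, hc]
    have : γ * (-(a / 4)) = -(a / 4 * γ) := by ring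
    linarith [hfq, hhq, hnqb]
  have hfreq : ∃ᶠ p : ℝ × EuclideanSpace ℝ (Fin l) in Flt,
      (((Fpen f hf xbar γ (x + p.1 • p.2) - Fpen f hf xbar γ x) / p.1 : ℝ) : EReal)
        ≤ ((c : ℝ) : EReal) :=
    (hev.mono fun p hp => EReal.coe_le_coe_iff.2 hp).frequently
  have hmain : lowerHadamardDeriv (Fpen f hf xbar γ) (Gset X g) x u ≤ ((c : ℝ) : EReal) := by
    rw [lowerHadamardDeriv, ← hFlt]
    exact Filter.liminf_le_of_frequently_le' hfreq
  refine ⟨hmain, fun hγ2 => ?_⟩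
  have hca : (2 * L + 2 * δ) * 4 < γ * a := (div_lt_iff₀ ha).1 hγ2
  have hc0 : c < 0 := by rw [hc]; nlinarith
  refine lt_of_le_of_lt hmain ?_
  exact_mod_cast hc0
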